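/- arXiv:1111.0986 — 5 statements merged into one kernel-verified Lean document; each statement's English description precedes it below -/
import Mathlib

section
/- For every integer m ≥ 2, the sum ∑_{j=1}^{m-2} C_{j+1}(C_{m-j+1} - C_{m-j}) + ∑_{j=2}^{m-1} (C_{j+1} - C_j) C_{m-j+1} equals 4(m-2)(2m+3)! / ((m+1)!(m+4)!), where C_n denotes the n-th Catalan number. -/
/-- `w` is an alternating (up-down) permutation: `w 0 < w 1 > w 2 < ⋯`. -/
def UpDown {n : ℕ} (w : Equiv.Perm (Fin n)) : Prop :=
  ∀ i : ℕ, ∀ h : i + 1 < n,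
    if i % 2 = 0 then w ⟨i, Nat.lt_of_succ_lt h⟩ < w ⟨i + 1, h⟩
    else w ⟨i + 1, h⟩ < w ⟨i, Nat.lt_of_succ_lt h⟩

/-- `w` is a reverse-alternating (down-up) permutation: `w 0 > w 1 < w 2 > ⋯`. -/
def DownUp {n : ℕ} (w : Equiv.Perm (Fin n)) : Prop :=
  ∀ i : ℕ, ∀ h : i + 1 < n,
    if i % 2 = 0 then w ⟨i + 1, h⟩ < w ⟨i, Nat.lt_of_succ_lt h⟩
    else w ⟨i, Nat.lt_of_succ_lt h⟩ < w ⟨i + 1, h⟩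

/-- The set of occurrences of the pattern 321 in `w`. -/
def occ321 {n : ℕ} (w : Equiv.Perm (Fin n)) : Set (Fin n × Fin n × Fin n) :=
  {t | t.1 < t.2.1 ∧ t.2.1 < t.2.2 ∧ w t.2.2 < w t.2.1 ∧ w t.2.1 < w t.1}

/-- The set of occurrences of the pattern 123 in `w`. -/
def occ123 {n : ℕ} (w : Equiv.Perm (Fin n)) : Set (Fin n × Fin n × Fin n) :=
  {t | t.1 < t.2.1 ∧ t.2.1 < t.2.2 ∧ w t.1 < w t.2.1 ∧ w t.2.1 < w t.2.2}

open Finset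

lemma cat_fact (n : ℕ) : catalan n * Nat.factorial (n+1) * Nat.factorial n = Nat.factorial (2*n) := by
  have h1 : (n+1) * catalan n = Nat.centralBinom n := succ_mul_catalan_eq_centralBinom n
  have h2 : Nat.choose (2*n) n * Nat.factorial n * Nat.factorial (2*n - n) = Nat.factorial (2*n) :=
    Nat.choose_mul_factorial_mul_factorial (by omega)
  have h3 : 2*n - n = n := by omega
  rw [h3] at h2
  calc catalan n * Nat.factorial (n+1) * Nat.factorial n
      = ((n+1) * catalan n) * Nat.factorial n * Nat.factorial n := by
        rw [Nat.factorial_succ]; ring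
    _ = Nat.centralBinom n * Nat.factorial n * Nat.factorial n := by rw [h1]
    _ = _ := by rw [Nat.centralBinom]; exact h2

lemma cat_mono (n : ℕ) : catalan n ≤ catalan (n+1) := by
  rw [catalan_succ']
  have hm : ((0:ℕ), n) ∈ Finset.HasAntidiagonal.antidiagonal n := by simp
  calc catalan n = catalan 0 * catalan n := by rw [catalan_zero, one_mul]
    _ ≤ _ := Finset.single_le_sum (f := fun p : ℕ × ℕ => catalan p.1 * catalan p.2)
        (fun i _ => Nat.zero_le _) hm

lemma cat_conv (n : ℕ) : ∑ i ∈ Finset.range (n+1), catalan i * catalan (n - i) = catalan (n+1) := by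
  rw [catalan_succ', Finset.Nat.sum_antidiagonal_eq_sum_range_succ_mk]

lemma split3 (n a b : ℕ) (h1 : a ≤ b) (h2 : b ≤ n+1) (f : ℕ → ℕ) :
    ∑ i ∈ Finset.range (n+1), f i =
      (∑ i ∈ Finset.range a, f i) + (∑ i ∈ Finset.Ico a b, f i) +
        ∑ i ∈ Finset.Ico b (n+1), f i := by
  rw [Finset.range_eq_Ico, ← Finset.sum_Ico_consecutive f (Nat.zero_le a) (h1.trans h2),
    ← Finset.sum_Ico_consecutive f h1 h2, add_assoc, Finset.range_eq_Ico]


theorem stmt0 (m : ℕ) (hm : 2 ≤ m) :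
    ((∑ j ∈ Finset.Icc 1 (m - 2), catalan (j + 1) * (catalan (m - j + 1) - catalan (m - j))) +
        ∑ j ∈ Finset.Icc 2 (m - 1), (catalan (j + 1) - catalan j) * catalan (m - j + 1)) *
        (Nat.factorial (m + 1) * Nat.factorial (m + 4)) =
      4 * (m - 2) * Nat.factorial (2 * m + 3) := by
  obtain ⟨k, rfl⟩ : ∃ k, m = k + 2 := ⟨m - 2, by omega⟩
  clear hm
  simp only [show k+2-2 = k from by omega, show k+2-1 = k+1 from by omega,
    show k+2+1 = k+3 from by omega, show k+2+4 = k+6 from by omega,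
    show 2*(k+2)+3 = 2*k+7 from by omega]
  set T1 : ℕ := ∑ j ∈ Finset.Icc 1 k, catalan (j+1) * catalan (k+2-j+1) with hT1
  set T2 : ℕ := ∑ j ∈ Finset.Icc 1 k, catalan (j+1) * catalan (k+2-j) with hT2
  set T3 : ℕ := ∑ j ∈ Finset.Icc 2 (k+1), catalan (j+1) * catalan (k+2-j+1) with hT3
  set T4 : ℕ := ∑ j ∈ Finset.Icc 2 (k+1), catalan j * catalan (k+2-j+1) with hT4
  -- rewrite the two sums as differences
  have hA : (∑ j ∈ Finset.Icc 1 k, catalan (j+1) * (catalan (k+2-j+1) - catalan (k+2-j)))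
      = T1 - T2 := by
    rw [hT1, hT2, ← Finset.sum_tsub_distrib _
      (fun j _ => Nat.mul_le_mul_left (catalan (j+1)) (cat_mono (k+2-j)))]
    exact Finset.sum_congr rfl fun j _ => Nat.mul_sub_left_distrib _ _ _
  have hB : (∑ j ∈ Finset.Icc 2 (k+1), (catalan (j+1) - catalan j) * catalan (k+2-j+1))
      = T3 - T4 := by
    rw [hT3, hT4, ← Finset.sum_tsub_distrib _
      (fun j _ => Nat.mul_le_mul_right (catalan (k+2-j+1)) (cat_mono j))]
    exact Finset.sum_congr rfl fun j _ => Nat.mul_sub_right_distrib _ _ _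
  rw [hA, hB]
  -- termwise comparisons
  have hle1 : T2 ≤ T1 := Finset.sum_le_sum
    (fun j _ => Nat.mul_le_mul_left (catalan (j+1)) (cat_mono (k+2-j)))
  have hle2 : T4 ≤ T3 := Finset.sum_le_sum
    (fun j _ => Nat.mul_le_mul_right (catalan (k+2-j+1)) (cat_mono j))
  -- evaluate T1
  have e1 : T1 + ((catalan (k+4) + catalan (k+3)) + (2*catalan (k+2) + catalan (k+3) + catalan (k+4)))
      = catalan (k+5) := by
    have r1 : T1 = ∑ i ∈ Finset.Ico 2 (k+2), catalan i * catalan (k+4-i) := by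
      rw [hT1, show Finset.Icc 1 k = Finset.Ico 1 (k+1) from (Finset.Ico_add_one_right_eq_Icc 1 k).symm,
        Finset.sum_Ico_eq_sum_range, Finset.sum_Ico_eq_sum_range,
        show k+1-1 = k from by omega, show k+2-2 = k from by omega]
      refine Finset.sum_congr rfl fun i hi => ?_
      simp only [Finset.mem_range] at hi
      congr 1
      · congr 1; omega
      · congr 1; omega
    have lo : ∑ i ∈ Finset.range 2, catalan i * catalan (k+4-i)
        = catalan (k+4) + catalan (k+3) := by
      rw [Finset.sum_range_succ, Finset.sum_range_succ, Finset.sum_range_zero,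
        show k+4-0 = k+4 from by omega, show k+4-1 = k+3 from by omega,
        catalan_zero, catalan_one]
      ring
    have hi : ∑ i ∈ Finset.Ico (k+2) (k+5), catalan i * catalan (k+4-i)
        = 2*catalan (k+2) + catalan (k+3) + catalan (k+4) := by
      rw [show k+5 = (k+4)+1 from rfl, Finset.sum_Ico_succ_top (by omega),
        show k+4 = (k+3)+1 from rfl, Finset.sum_Ico_succ_top (by omega),
        show k+3 = (k+2)+1 from rfl, Finset.sum_Ico_succ_top (by omega),
        Finset.Ico_self, Finset.sum_empty,
        show k+2+1+1-(k+2) = 2 from by omega, show k+2+1+1-(k+2+1) = 1 from by omega,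
        show k+2+1+1-(k+2+1+1) = 0 from by omega,
        catalan_zero, catalan_one, catalan_two]
      ring
    have hcc := cat_conv (k+4)
    rw [split3 (k+4) 2 (k+2) (by omega) (by omega)] at hcc
    rw [show k+4+1 = k+5 from rfl] at hcc
    rw [lo, hi] at hcc
    rw [r1]
    omega
  -- evaluate T2
  have e2 : T2 + ((catalan (k+3) + catalan (k+2)) + (catalan (k+2) + catalan (k+3)))
      = catalan (k+4) := by
    have r2 : T2 = ∑ i ∈ Finset.Ico 2 (k+2), catalan i * catalan (k+3-i) := by
      rw [hT2, show Finset.Icc 1 k = Finset.Ico 1 (k+1) from (Finset.Ico_add_one_right_eq_Icc 1 k).symm,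
        Finset.sum_Ico_eq_sum_range, Finset.sum_Ico_eq_sum_range,
        show k+1-1 = k from by omega, show k+2-2 = k from by omega]
      refine Finset.sum_congr rfl fun i hi => ?_
      simp only [Finset.mem_range] at hi
      congr 1
      · congr 1; omega
      · congr 1; omega
    have lo : ∑ i ∈ Finset.range 2, catalan i * catalan (k+3-i)
        = catalan (k+3) + catalan (k+2) := by
      rw [Finset.sum_range_succ, Finset.sum_range_succ, Finset.sum_range_zero,
        show k+3-0 = k+3 from by omega, show k+3-1 = k+2 from by omega,
        catalan_zero, catalan_one]
      ring
    have hi : ∑ i ∈ Finset.Ico (k+2) (k+4), catalan i * catalan (k+3-i)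
        = catalan (k+2) + catalan (k+3) := by
      rw [show k+4 = (k+3)+1 from rfl, Finset.sum_Ico_succ_top (by omega),
        show k+3 = (k+2)+1 from rfl, Finset.sum_Ico_succ_top (by omega),
        Finset.Ico_self, Finset.sum_empty,
        show k+2+1-(k+2) = 1 from by omega, show k+2+1-(k+2+1) = 0 from by omega,
        catalan_zero, catalan_one]
      ring
    have hcc := cat_conv (k+3)
    rw [split3 (k+3) 2 (k+2) (by omega) (by omega)] at hcc
    rw [show k+3+1 = k+4 from rfl] at hcc
    rw [lo, hi] at hcc
    rw [r2]
    omega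
  -- evaluate T3
  have e3 : T3 + ((catalan (k+4) + catalan (k+3) + 2*catalan (k+2)) + (catalan (k+3) + catalan (k+4)))
      = catalan (k+5) := by
    have r3 : T3 = ∑ i ∈ Finset.Ico 3 (k+3), catalan i * catalan (k+4-i) := by
      rw [hT3, show Finset.Icc 2 (k+1) = Finset.Ico 2 (k+2) from (Finset.Ico_add_one_right_eq_Icc 2 (k+1)).symm,
        Finset.sum_Ico_eq_sum_range, Finset.sum_Ico_eq_sum_range,
        show k+2-2 = k from by omega, show k+3-3 = k from by omega]
      refine Finset.sum_congr rfl fun i hi => ?_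
      simp only [Finset.mem_range] at hi
      congr 1
      · congr 1; omega
      · congr 1; omega
    have lo : ∑ i ∈ Finset.range 3, catalan i * catalan (k+4-i)
        = catalan (k+4) + catalan (k+3) + 2*catalan (k+2) := by
      rw [Finset.sum_range_succ, Finset.sum_range_succ, Finset.sum_range_succ, Finset.sum_range_zero,
        show k+4-0 = k+4 from by omega, show k+4-1 = k+3 from by omega,
        show k+4-2 = k+2 from by omega, catalan_zero, catalan_one, catalan_two]
      ring
    have hi : ∑ i ∈ Finset.Ico (k+3) (k+5), catalan i * catalan (k+4-i)
        = catalan (k+3) + catalan (k+4) := by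
      rw [show k+5 = (k+4)+1 from rfl, Finset.sum_Ico_succ_top (by omega),
        show k+4 = (k+3)+1 from rfl, Finset.sum_Ico_succ_top (by omega),
        Finset.Ico_self, Finset.sum_empty,
        show k+3+1-(k+3) = 1 from by omega, show k+3+1-(k+3+1) = 0 from by omega,
        catalan_zero, catalan_one]
      ring
    have hcc := cat_conv (k+4)
    rw [split3 (k+4) 3 (k+3) (by omega) (by omega)] at hcc
    rw [show k+4+1 = k+5 from rfl] at hcc
    rw [lo, hi] at hcc
    rw [r3]
    omega
  -- T4 equals T2
  have e4 : T4 = T2 := by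
    rw [hT4, hT2, show Finset.Icc 2 (k+1) = Finset.Ico 2 (k+2) from (Finset.Ico_add_one_right_eq_Icc 2 (k+1)).symm,
      show Finset.Icc 1 k = Finset.Ico 1 (k+1) from (Finset.Ico_add_one_right_eq_Icc 1 k).symm,
      Finset.sum_Ico_eq_sum_range, Finset.sum_Ico_eq_sum_range,
      show k+1-1 = k from by omega, show k+2-2 = k from by omega]
    refine Finset.sum_congr rfl fun i hi => ?_
    simp only [Finset.mem_range] at hi
    congr 1
    · congr 1; omega
    · congr 1; omega
  -- combine
  have hS : T1 - T2 + (T3 - T4) + 6 * catalan (k+4) = 2 * catalan (k+5) := by omega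
  -- factorial identities
  have f6 : Nat.factorial (k+6) = (k+6) * Nat.factorial (k+5) := Nat.factorial_succ (k+5)
  have f5 : Nat.factorial (k+5) = (k+5) * Nat.factorial (k+4) := Nat.factorial_succ (k+4)
  have f4 : Nat.factorial (k+4) = (k+4) * Nat.factorial (k+3) := Nat.factorial_succ (k+3)
  have g10 : Nat.factorial (2*k+10) = (2*k+10) * Nat.factorial (2*k+9) := Nat.factorial_succ (2*k+9)
  have g9 : Nat.factorial (2*k+9) = (2*k+9) * Nat.factorial (2*k+8) := Nat.factorial_succ (2*k+8)
  have g8 : Nat.factorial (2*k+8) = (2*k+8) * Nat.factorial (2*k+7) := Nat.factorial_succ (2*k+7)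
  have e5 : catalan (k+5) * ((k+6)*((k+5)*((k+4)*Nat.factorial (k+3))))
        * ((k+5)*((k+4)*Nat.factorial (k+3)))
      = (2*k+10)*((2*k+9)*((2*k+8)*Nat.factorial (2*k+7))) := by
    have hcf := cat_fact (k+5)
    rw [show 2*(k+5) = 2*k+10 from by ring, show k+5+1 = k+6 from rfl] at hcf
    rw [g10, g9, g8] at hcf
    rw [f6, f5, f4] at hcf
    rw [← hcf]
  have e6 : catalan (k+4) * ((k+5)*((k+4)*Nat.factorial (k+3)))
        * ((k+4)*Nat.factorial (k+3))
      = (2*k+8)*Nat.factorial (2*k+7) := by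
    have hcf := cat_fact (k+4)
    rw [show 2*(k+4) = 2*k+8 from by ring, show k+4+1 = k+5 from rfl] at hcf
    rw [g8] at hcf
    rw [f5, f4] at hcf
    rw [← hcf]
  -- the key factorial computation
  have key : 2 * catalan (k+5) * (Nat.factorial (k+3) * Nat.factorial (k+6)) * ((k+4)*(k+5))
      = 4*k*Nat.factorial (2*k+7) * ((k+4)*(k+5))
        + 6 * catalan (k+4) * (Nat.factorial (k+3) * Nat.factorial (k+6)) * ((k+4)*(k+5)) := by
    have hf6 : Nat.factorial (k+6) = (k+6)*((k+5)*((k+4)*Nat.factorial (k+3))) := by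
      rw [f6, f5, f4]
    rw [hf6]
    calc 2 * catalan (k+5) * (Nat.factorial (k+3) * ((k+6)*((k+5)*((k+4)*Nat.factorial (k+3))))) * ((k+4)*(k+5))
        = 2 * (catalan (k+5) * ((k+6)*((k+5)*((k+4)*Nat.factorial (k+3))))
            * ((k+5)*((k+4)*Nat.factorial (k+3)))) := by ring
      _ = 2 * ((2*k+10)*((2*k+9)*((2*k+8)*Nat.factorial (2*k+7)))) := by rw [e5]
      _ = 4*k*Nat.factorial (2*k+7) * ((k+4)*(k+5))
            + 6 * ((2*k+8)*Nat.factorial (2*k+7)) * ((k+5)*(k+6)) := by ring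
      _ = 4*k*Nat.factorial (2*k+7) * ((k+4)*(k+5))
            + 6 * (catalan (k+4) * ((k+5)*((k+4)*Nat.factorial (k+3)))
              * ((k+4)*Nat.factorial (k+3))) * ((k+5)*(k+6)) := by rw [e6]
      _ = _ := by ring
  -- finish: cancel the positive factor (k+4)*(k+5)
  apply Nat.eq_of_mul_eq_mul_right (show 0 < (k+4)*(k+5) by positivity)
  have keyS : (T1 - T2 + (T3 - T4)) * (Nat.factorial (k+3) * Nat.factorial (k+6)) * ((k+4)*(k+5))
        + 6 * catalan (k+4) * (Nat.factorial (k+3) * Nat.factorial (k+6)) * ((k+4)*(k+5))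
      = 2 * catalan (k+5) * (Nat.factorial (k+3) * Nat.factorial (k+6)) * ((k+4)*(k+5)) := by
    rw [← hS]; ring
  omega
end

section
/- For every ℓ ≥ 0, the number of 321-avoiding reverse-alternating (down-up) permutations of length 2ℓ is the Catalan number C_ℓ. -/
open DyckStep Finset

def Peaky (l : ℕ) (w : Equiv.Perm (Fin (2 * l))) : Prop :=
  (∀ i j : Fin (2 * l), i < j → i.val % 2 = j.val % 2 → w i < w j) ∧
  (∀ i : ℕ, ∀ h : i + 1 < 2 * l, i % 2 = 0 →
    w ⟨i + 1, h⟩ < w ⟨i, Nat.lt_of_succ_lt h⟩)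

lemma peaky_downUp {l : ℕ} {w : Equiv.Perm (Fin (2 * l))} (hP : Peaky l w) : DownUp w := by
  intro i h
  rcases hP with ⟨hmono, hpeak⟩
  by_cases hi : i % 2 = 0
  · rw [if_pos hi]; exact hpeak i h hi
  · rw [if_neg hi]
    have hi1 : 1 ≤ i := by omega
    have h0 : i - 1 + 1 < 2 * l := by omega
    have e1 : (⟨i - 1 + 1, h0⟩ : Fin (2 * l)) = ⟨i, Nat.lt_of_succ_lt h⟩ := Fin.ext (by simp only [Fin.val_mk]; omega)
    have s1 : w ⟨i, Nat.lt_of_succ_lt h⟩ < w ⟨i - 1, Nat.lt_of_succ_lt h0⟩ := by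
      rw [← e1]; exact hpeak (i - 1) h0 (by omega)
    have s2 : w ⟨i - 1, Nat.lt_of_succ_lt h0⟩ < w ⟨i + 1, h⟩ :=
      hmono _ _ (by rw [Fin.lt_def]; simp only [Fin.val_mk]; omega) (by simp only [Fin.val_mk]; omega)
    exact s1.trans s2

lemma peaky_decpair {l : ℕ} {w : Equiv.Perm (Fin (2 * l))} (hP : Peaky l w)
    {x y : Fin (2 * l)} (hxy : x < y) (hw : w y < w x) :
    x.val % 2 = 0 ∧ y.val % 2 = 1 := by
  have hdu := peaky_downUp hP
  rcases hP with ⟨hmono, hpeak⟩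
  by_cases hpar : x.val % 2 = y.val % 2
  · exact absurd (hmono x y hxy hpar) (by exact not_lt_of_gt hw)
  by_cases hx : x.val % 2 = 0
  · exact ⟨hx, by omega⟩
  · exfalso
    -- x odd, y even
    have hx1 : x.val + 1 < 2 * l := by
      have := y.isLt; have := hxy; rw [Fin.lt_def] at this; omega
    have s1 : w x < w ⟨x.val + 1, hx1⟩ := by
      have := hdu x.val hx1
      rw [if_neg hx] at this
      simpa using this
    have s2 : w ⟨x.val + 1, hx1⟩ ≤ w y := by
      rcases eq_or_lt_of_le (show x.val + 1 ≤ y.val by rw [Fin.lt_def] at hxy; omega) with he | hlt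
      · exact le_of_eq (congrArg w (Fin.ext he))
      · exact le_of_lt (hmono _ _ (by rw [Fin.lt_def]; simp only [Fin.val_mk]; omega) (by simp only [Fin.val_mk]; omega))
    exact absurd (s1.trans_le s2) (not_lt_of_gt hw)

lemma peaky_iff {l : ℕ} (w : Equiv.Perm (Fin (2 * l))) :
    (DownUp w ∧ occ321 w = ∅) ↔ Peaky l w := by
  rw [Set.eq_empty_iff_forall_notMem]
  constructor
  · rintro ⟨hdu, hav⟩
    constructor
    · intro i j hij hpar
      by_contra hle
      push_neg at hle
      have hji : w j < w i := lt_of_le_of_ne hle (fun h => absurd (w.injective h) (Fin.ne_of_gt hij))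
      by_cases hj : j.val % 2 = 0
      · have hj1 : j.val + 1 < 2 * l := by have := j.isLt; omega
        have s1 : w ⟨j.val + 1, hj1⟩ < w j := by
          have := hdu j.val hj1; rw [if_pos hj] at this; simpa using this
        exact hav (i, j, ⟨j.val + 1, hj1⟩) ⟨hij, by rw [Fin.lt_def]; simp only [Fin.val_mk]; omega, s1, hji⟩
      · have hi2 : i.val % 2 ≠ 0 := by omega
        have h0 : i.val - 1 + 1 < 2 * l := by have := i.isLt; omega
        have e1 : (⟨i.val - 1 + 1, h0⟩ : Fin (2 * l)) = i := Fin.ext (by simp only [Fin.val_mk]; omega)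
        have s1 : w i < w ⟨i.val - 1, Nat.lt_of_succ_lt h0⟩ := by
          have := hdu (i.val - 1) h0; rw [if_pos (by omega)] at this; rw [e1] at this; exact this
        exact hav (⟨i.val - 1, Nat.lt_of_succ_lt h0⟩, i, j)
          ⟨by rw [Fin.lt_def]; simp only [Fin.val_mk]; omega, hij, hji, s1⟩
    · intro i h hi
      have := hdu i h; rw [if_pos hi] at this; exact this
  · intro hP
    refine ⟨peaky_downUp hP, ?_⟩
    rintro ⟨i, j, k⟩ ⟨hij, hjk, h1, h2⟩
    have d1 := peaky_decpair hP hij h2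
    have d2 := peaky_decpair hP hjk h1
    omega


lemma count_take_ofFn {n : ℕ} (f : Fin n → DyckStep) (s : DyckStep) :
    ∀ t : ℕ, t ≤ n →
      ((List.ofFn f).take t).count s =
        (Finset.univ.filter (fun v : Fin n => v.val < t ∧ f v = s)).card
  | 0, _ => by simp
  | (t+1), ht => by
    have hlt : t < (List.ofFn f).length := by simpa using ht
    rw [List.take_succ, List.count_append, count_take_ofFn f s t (by omega)]
    have hget : (List.ofFn f)[t]? = some (f ⟨t, by omega⟩) := by
      rw [List.getElem?_eq_getElem hlt]
      simp
    rw [hget]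
    have hsplit : (Finset.univ.filter (fun v : Fin n => v.val < t + 1 ∧ f v = s)) =
        if f ⟨t, by omega⟩ = s then
          insert ⟨t, by omega⟩ (Finset.univ.filter (fun v : Fin n => v.val < t ∧ f v = s))
        else (Finset.univ.filter (fun v : Fin n => v.val < t ∧ f v = s)) := by
      split_ifs with hf
      · ext v
        simp only [mem_filter, mem_insert, mem_univ, true_and]
        constructor
        · rintro ⟨hv, hs⟩
          rcases Nat.lt_or_ge v.val t with h | h
          · exact Or.inr ⟨h, hs⟩
          · exact Or.inl (Fin.ext (by simp only [Fin.val_mk]; omega))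
        · rintro (rfl | ⟨hv, hs⟩)
          · exact ⟨by simp only [Fin.val_mk]; omega, hf⟩
          · exact ⟨by omega, hs⟩
      · ext v
        simp only [mem_filter, mem_univ, true_and]
        constructor
        · rintro ⟨hv, hs⟩
          refine ⟨?_, hs⟩
          rcases Nat.lt_or_ge v.val t with h | h
          · exact h
          · exact absurd hs (by have : v = ⟨t, by omega⟩ := Fin.ext (by simp only [Fin.val_mk]; omega); rw [this]; exact hf)
        · rintro ⟨hv, hs⟩; exact ⟨by omega, hs⟩
    rw [hsplit]
    split_ifs with hf
    · rw [card_insert_of_notMem (by simp)]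
      simp [Option.toList, List.count_singleton', hf]
    · simp [Option.toList, List.count_singleton', hf]

lemma count_ofFn (n : ℕ) (f : Fin n → DyckStep) (s : DyckStep) :
    (List.ofFn f).count s = (Finset.univ.filter (fun v : Fin n => f v = s)).card := by
  have := count_take_ofFn f s n le_rfl
  rw [List.take_of_length_le (by simp)] at this
  rw [this]
  congr 1
  ext v
  simp [v.isLt]

-- rank lemmas
lemma rank_lt_of_orderEmb {n l : ℕ} (A : Finset (Fin n)) (hA : A.card = l) (k : Fin l) (t : ℕ)
    (h : (A.orderEmbOfFin hA k).val < t) :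
    k.val < (A.filter (fun v => v.val < t)).card := by
  classical
  have hsub : (Finset.univ.filter (fun j : Fin l => j ≤ k)).image (A.orderEmbOfFin hA) ⊆
      A.filter (fun v => v.val < t) := by
    intro v hv
    simp only [mem_image, mem_filter, mem_univ, true_and] at hv ⊢
    obtain ⟨j, hj, rfl⟩ := hv
    refine ⟨Finset.orderEmbOfFin_mem A hA j, ?_⟩
    exact lt_of_le_of_lt (by exact_mod_cast (A.orderEmbOfFin hA).monotone hj) h
  calc k.val < k.val + 1 := by omega
    _ = (Finset.univ.filter (fun j : Fin l => j ≤ k)).card := by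
        have : (Finset.univ.filter (fun j : Fin l => j ≤ k)) = Finset.Iic k := by
          ext j; simp
        rw [this, Fin.card_Iic]
    _ = ((Finset.univ.filter (fun j : Fin l => j ≤ k)).image (A.orderEmbOfFin hA)).card := by
        rw [Finset.card_image_of_injective _ (A.orderEmbOfFin hA).injective]
    _ ≤ _ := Finset.card_le_card hsub

lemma lt_of_rank_lt {n l : ℕ} (A : Finset (Fin n)) (hA : A.card = l) (k : Fin l) (t : ℕ)
    (h : k.val < (A.filter (fun v => v.val < t)).card) :
    (A.orderEmbOfFin hA k).val < t := by
  classical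
  by_contra hc
  push_neg at hc
  have hsub : A.filter (fun v => v.val < t) ⊆
      (Finset.univ.filter (fun j : Fin l => j < k)).image (A.orderEmbOfFin hA) := by
    intro v hv
    simp only [mem_filter, mem_univ, true_and] at hv
    obtain ⟨hvA, hvt⟩ := hv
    obtain ⟨j, rfl⟩ : ∃ j, A.orderEmbOfFin hA j = v := by
      have : v ∈ Set.range (A.orderEmbOfFin hA) := by
        rw [Finset.range_orderEmbOfFin]; exact_mod_cast hvA
      exact this
    simp only [mem_image, mem_filter, mem_univ, true_and]
    refine ⟨j, ?_, rfl⟩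
    by_contra hjk
    push_neg at hjk
    have := (A.orderEmbOfFin hA).monotone hjk
    omega
  have := Finset.card_le_card hsub
  rw [Finset.card_image_of_injective _ (A.orderEmbOfFin hA).injective] at this
  have hcard : (Finset.univ.filter (fun j : Fin l => j < k)).card ≤ k.val := by
    have : (Finset.univ.filter (fun j : Fin l => j < k)) = Finset.Iio k := by
      ext j; simp
    rw [this, Fin.card_Iio]
  omega

section
variable {l : ℕ}

/-- The Dyck step at value `v`: `D` if `v` sits at an even (peak) position. -/
def wordFn (w : Equiv.Perm (Fin (2 * l))) (v : Fin (2 * l)) : DyckStep :=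
  if (w.symm v).val % 2 = 0 then D else U

lemma wordFn_eq_D_iff {w : Equiv.Perm (Fin (2 * l))} {v : Fin (2 * l)} :
    wordFn w v = D ↔ (w.symm v).val % 2 = 0 := by
  unfold wordFn; split_ifs with h <;> simp [h]

lemma wordFn_eq_U_iff {w : Equiv.Perm (Fin (2 * l))} {v : Fin (2 * l)} :
    wordFn w v = U ↔ (w.symm v).val % 2 = 1 := by
  unfold wordFn; split_ifs with h <;> simp [h] <;> omega

lemma card_wordFn_D_le_U {w : Equiv.Perm (Fin (2 * l))} (hP : Peaky l w) (t : ℕ) :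
    (Finset.univ.filter (fun v : Fin (2 * l) => v.val < t ∧ wordFn w v = D)).card ≤
      (Finset.univ.filter (fun v : Fin (2 * l) => v.val < t ∧ wordFn w v = U)).card := by
  classical
  apply Finset.card_le_card_of_injOn
    (fun v => if h : (w.symm v).val + 1 < 2 * l then w ⟨(w.symm v).val + 1, h⟩ else v)
  · intro v hv
    simp only [Finset.mem_coe, mem_filter, mem_univ, true_and, wordFn_eq_D_iff] at hv
    obtain ⟨hvt, hve⟩ := hv
    have hlt : (w.symm v).val + 1 < 2 * l := by have := (w.symm v).isLt; omega
    simp only [dif_pos hlt, Finset.mem_coe, mem_filter, mem_univ, true_and, wordFn_eq_U_iff]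
    constructor
    · have hpk : w ⟨(w.symm v).val + 1, hlt⟩ < w ⟨(w.symm v).val, Nat.lt_of_succ_lt hlt⟩ :=
        hP.2 (w.symm v).val hlt hve
      have : (⟨(w.symm v).val, Nat.lt_of_succ_lt hlt⟩ : Fin (2 * l)) = w.symm v := Fin.ext rfl
      rw [this, Equiv.apply_symm_apply] at hpk
      have hvv := Fin.lt_def.mp hpk
      omega
    · rw [Equiv.symm_apply_apply]; simp only [Fin.val_mk]; omega
  · intro v1 h1 v2 h2 he
    simp only [Finset.coe_filter, Set.mem_setOf_eq, mem_univ, true_and, wordFn_eq_D_iff] at h1 h2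
    have hl1 : (w.symm v1).val + 1 < 2 * l := by
      have h1' := h1.2; have := (w.symm v1).isLt; omega
    have hl2 : (w.symm v2).val + 1 < 2 * l := by
      have h2' := h2.2; have := (w.symm v2).isLt; omega
    simp only [dif_pos hl1, dif_pos hl2] at he
    have := w.injective he
    have hval : (w.symm v1).val = (w.symm v2).val := by
      have := congrArg Fin.val this; simp only [Fin.val_mk] at this; omega
    have : w.symm v1 = w.symm v2 := Fin.ext hval
    exact w.symm.injective this
lemma card_wordFn_U_le_D {w : Equiv.Perm (Fin (2 * l))} (hP : Peaky l w) :
    (Finset.univ.filter (fun v : Fin (2 * l) => wordFn w v = U)).card ≤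
      (Finset.univ.filter (fun v : Fin (2 * l) => wordFn w v = D)).card := by
  classical
  apply Finset.card_le_card_of_injOn
    (fun v => if h : 1 ≤ (w.symm v).val then
      w ⟨(w.symm v).val - 1, by have := (w.symm v).isLt; omega⟩ else v)
  · intro v hv
    have hv' : (w.symm v).val % 2 = 1 := by simpa [wordFn_eq_U_iff] using hv
    have h1 : 1 ≤ (w.symm v).val := by omega
    simp only [dif_pos h1, Finset.mem_coe, mem_filter, mem_univ, true_and, wordFn_eq_D_iff]
    rw [Equiv.symm_apply_apply]; simp only [Fin.val_mk]; omega
  · intro v1 h1 v2 h2 he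
    have h1' : (w.symm v1).val % 2 = 1 := by simpa [wordFn_eq_U_iff] using h1
    have h2' : (w.symm v2).val % 2 = 1 := by simpa [wordFn_eq_U_iff] using h2
    have hl1 : 1 ≤ (w.symm v1).val := by omega
    have hl2 : 1 ≤ (w.symm v2).val := by omega
    simp only [dif_pos hl1, dif_pos hl2] at he
    have hm1 := congrArg Fin.val (w.injective he)
    simp only [Fin.val_mk] at hm1
    have : w.symm v1 = w.symm v2 := Fin.ext (by omega)
    exact w.symm.injective this

lemma filter_lt_full {n : ℕ} (p : Fin n → Prop) [DecidablePred p] :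
    (Finset.univ.filter (fun v : Fin n => v.val < n ∧ p v)) = Finset.univ.filter p := by
  ext v; simp [v.isLt]

lemma card_wordFn_U_eq_D {w : Equiv.Perm (Fin (2 * l))} (hP : Peaky l w) :
    (Finset.univ.filter (fun v : Fin (2 * l) => wordFn w v = U)).card =
      (Finset.univ.filter (fun v : Fin (2 * l) => wordFn w v = D)).card := by
  refine le_antisymm (card_wordFn_U_le_D hP) ?_
  have := card_wordFn_D_le_U hP (2 * l)
  rwa [filter_lt_full, filter_lt_full] at this

lemma card_wordFn_D_eq_l {w : Equiv.Perm (Fin (2 * l))} (hP : Peaky l w) :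
    (Finset.univ.filter (fun v : Fin (2 * l) => wordFn w v = D)).card = l := by
  classical
  have hsum := Finset.card_filter_add_card_filter_not
    (s := (Finset.univ : Finset (Fin (2 * l)))) (p := fun v => wordFn w v = D)
  have hneg : (Finset.univ.filter (fun v : Fin (2 * l) => ¬ wordFn w v = D)) =
      Finset.univ.filter (fun v : Fin (2 * l) => wordFn w v = U) := by
    ext v; simp only [mem_filter, mem_univ, true_and]
    rcases (wordFn w v).dichotomy with h | h <;> simp [h]
  rw [hneg] at hsum
  have := card_wordFn_U_eq_D hP
  simp only [Finset.card_univ, Fintype.card_fin] at hsum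
  omega

/-- The Dyck word associated to a `Peaky` permutation. -/
def toWord (w : Equiv.Perm (Fin (2 * l))) (hP : Peaky l w) : DyckWord where
  toList := List.ofFn (wordFn w)
  count_U_eq_count_D := by
    rw [count_ofFn, count_ofFn, card_wordFn_U_eq_D hP]
  count_D_le_count_U := by
    intro t
    rcases le_or_gt t (2 * l) with ht | ht
    · rw [count_take_ofFn _ _ t (by simpa using ht), count_take_ofFn _ _ t (by simpa using ht)]
      exact card_wordFn_D_le_U hP t
    · rw [List.take_of_length_le (by simp; omega), count_ofFn, count_ofFn]
      have h1 := card_wordFn_D_le_U hP (2 * l)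
      rwa [filter_lt_full, filter_lt_full] at h1

lemma toWord_semilength {w : Equiv.Perm (Fin (2 * l))} (hP : Peaky l w) :
    (toWord w hP).semilength = l := by
  show (List.ofFn (wordFn w)).count U = l
  rw [count_ofFn, card_wordFn_U_eq_D hP, card_wordFn_D_eq_l hP]
end

lemma filter_comm' {n : ℕ} (p q : Fin n → Prop) [DecidablePred p] [DecidablePred q] :
    ((Finset.univ.filter p).filter q) = Finset.univ.filter (fun v => q v ∧ p v) := by
  ext v; simp only [mem_filter, mem_univ, true_and]; tauto

lemma orderEmbOfFin_congr {n m : ℕ} {A B : Finset (Fin n)} (h : A = B) (hA : A.card = m)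
    (hB : B.card = m) (k : Fin m) : A.orderEmbOfFin hA k = B.orderEmbOfFin hB k := by
  subst h; rfl

section
variable {l : ℕ}

lemma orderEmb_eq_even {w : Equiv.Perm (Fin (2 * l))} (hP : Peaky l w)
    (hA : (Finset.univ.filter (fun v : Fin (2 * l) => wordFn w v = D)).card = l) (k : Fin l) :
    (Finset.univ.filter (fun v : Fin (2 * l) => wordFn w v = D)).orderEmbOfFin hA k =
      w ⟨2 * k.val, by have := k.isLt; omega⟩ := by
  have hu := Finset.orderEmbOfFin_unique hA
    (f := fun k : Fin l => w ⟨2 * k.val, by have := k.isLt; omega⟩) ?_ ?_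
  · exact (congrFun hu k).symm
  · intro j
    simp only [mem_filter, mem_univ, true_and, wordFn_eq_D_iff, Equiv.symm_apply_apply,
      Fin.val_mk]
    omega
  · intro j j' hjj
    exact hP.1 _ _ (Fin.mk_lt_mk.mpr (by omega)) (by simp only [Fin.val_mk]; omega)

lemma orderEmb_eq_odd {w : Equiv.Perm (Fin (2 * l))} (hP : Peaky l w)
    (hB : (Finset.univ.filter (fun v : Fin (2 * l) => wordFn w v = U)).card = l) (k : Fin l) :
    (Finset.univ.filter (fun v : Fin (2 * l) => wordFn w v = U)).orderEmbOfFin hB k =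
      w ⟨2 * k.val + 1, by have := k.isLt; omega⟩ := by
  have hu := Finset.orderEmbOfFin_unique hB
    (f := fun k : Fin l => w ⟨2 * k.val + 1, by have := k.isLt; omega⟩) ?_ ?_
  · exact (congrFun hu k).symm
  · intro j
    simp only [mem_filter, mem_univ, true_and, wordFn_eq_U_iff, Equiv.symm_apply_apply,
      Fin.val_mk]
    omega
  · intro j j' hjj
    exact hP.1 _ _ (Fin.mk_lt_mk.mpr (by omega)) (by simp only [Fin.val_mk]; omega)

lemma toWord_injective {w1 w2 : Equiv.Perm (Fin (2 * l))} (h1 : Peaky l w1) (h2 : Peaky l w2)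
    (he : toWord w1 h1 = toWord w2 h2) : w1 = w2 := by
  have hfn : ∀ v, wordFn w1 v = wordFn w2 v := by
    have hl : List.ofFn (wordFn w1) = List.ofFn (wordFn w2) := congrArg DyckWord.toList he
    have := List.ofFn_inj.mp hl
    exact fun v => congrFun this v
  have hset : (Finset.univ.filter (fun v : Fin (2 * l) => wordFn w1 v = D)) =
      (Finset.univ.filter (fun v : Fin (2 * l) => wordFn w2 v = D)) := by
    apply Finset.filter_congr; intro v _; rw [hfn v]
  have hsetU : (Finset.univ.filter (fun v : Fin (2 * l) => wordFn w1 v = U)) =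
      (Finset.univ.filter (fun v : Fin (2 * l) => wordFn w2 v = U)) := by
    apply Finset.filter_congr; intro v _; rw [hfn v]
  have hA1 := card_wordFn_D_eq_l h1
  have hB1 : (Finset.univ.filter (fun v : Fin (2 * l) => wordFn w1 v = U)).card = l := by
    rw [card_wordFn_U_eq_D h1]; exact hA1
  have hA2 := card_wordFn_D_eq_l h2
  have hB2 : (Finset.univ.filter (fun v : Fin (2 * l) => wordFn w2 v = U)).card = l := by
    rw [card_wordFn_U_eq_D h2]; exact hA2
  apply Equiv.ext
  intro i
  by_cases hi : i.val % 2 = 0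
  · have e1 := orderEmb_eq_even h1 hA1 ⟨i.val / 2, by have := i.isLt; omega⟩
    have e2 := orderEmb_eq_even h2 hA2 ⟨i.val / 2, by have := i.isLt; omega⟩
    have : w1 ⟨2 * (i.val / 2), by have := i.isLt; omega⟩ =
        w2 ⟨2 * (i.val / 2), by have := i.isLt; omega⟩ :=
      e1.symm.trans ((orderEmbOfFin_congr hset hA1 hA2 _).trans e2)
    have hieq : (⟨2 * (i.val / 2), by have := i.isLt; omega⟩ : Fin (2 * l)) = i :=
      Fin.ext (by simp only [Fin.val_mk]; omega)
    rwa [hieq] at this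
  · have e1 := orderEmb_eq_odd h1 hB1 ⟨i.val / 2, by have := i.isLt; omega⟩
    have e2 := orderEmb_eq_odd h2 hB2 ⟨i.val / 2, by have := i.isLt; omega⟩
    have : w1 ⟨2 * (i.val / 2) + 1, by have := i.isLt; omega⟩ =
        w2 ⟨2 * (i.val / 2) + 1, by have := i.isLt; omega⟩ :=
      e1.symm.trans ((orderEmbOfFin_congr hsetU hB1 hB2 _).trans e2)
    have hieq : (⟨2 * (i.val / 2) + 1, by have := i.isLt; omega⟩ : Fin (2 * l)) = i :=
      Fin.ext (by simp only [Fin.val_mk]; omega)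
    rwa [hieq] at this

lemma toWord_surjective (p : DyckWord) (hp : p.semilength = l) :
    ∃ w : Equiv.Perm (Fin (2 * l)), ∃ hP : Peaky l w, toWord w hP = p := by
  classical
  have hlen : p.toList.length = 2 * l := by
    have := p.two_mul_semilength_eq_length
    omega
  set f : Fin (2 * l) → DyckStep := fun v => p.toList.get (Fin.cast hlen.symm v) with hf
  have hofn : p.toList = List.ofFn f := by
    apply List.ext_get (by simp [hlen])
    intro i hi1 hi2
    rw [List.get_ofFn]
    rfl
  set A : Finset (Fin (2 * l)) := Finset.univ.filter (fun v => f v = D) with hAdef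
  set B : Finset (Fin (2 * l)) := Finset.univ.filter (fun v => f v = U) with hBdef
  have hA : A.card = l := by
    have h1 : p.toList.count D = l := by
      rw [← DyckWord.semilength_eq_count_D, hp]
    rw [hofn, count_ofFn] at h1
    exact h1
  have hB : B.card = l := by
    have h1 : p.toList.count U = l := hp
    rw [hofn, count_ofFn] at h1
    exact h1
  have hpoint : ∀ k : Fin l, B.orderEmbOfFin hB k < A.orderEmbOfFin hA k := by
    intro k
    obtain ⟨t, htdef⟩ : ∃ t, t = (A.orderEmbOfFin hA k).val + 1 := ⟨_, rfl⟩
    have ht : t ≤ 2 * l := by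
      have := (A.orderEmbOfFin hA k).isLt; omega
    have hDa : k.val < (A.filter (fun v => v.val < t)).card :=
      rank_lt_of_orderEmb A hA k t (by omega)
    have hcount := p.count_D_le_count_U t
    rw [hofn, count_take_ofFn _ _ t ht, count_take_ofFn _ _ t ht] at hcount
    have hAfil : A.filter (fun v => v.val < t) =
        Finset.univ.filter (fun v : Fin (2 * l) => v.val < t ∧ f v = D) := by
      rw [hAdef, filter_comm']
    have hBfil : B.filter (fun v => v.val < t) =
        Finset.univ.filter (fun v : Fin (2 * l) => v.val < t ∧ f v = U) := by
      rw [hBdef, filter_comm']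
    have hUb : k.val < (B.filter (fun v => v.val < t)).card := by
      rw [hBfil]; rw [hAfil] at hDa; omega
    have hblt := lt_of_rank_lt B hB k t hUb
    have hne : (B.orderEmbOfFin hB k) ≠ A.orderEmbOfFin hA k := by
      intro hcon
      have hmemB := Finset.orderEmbOfFin_mem B hB k
      have hmemA := Finset.orderEmbOfFin_mem A hA k
      rw [hcon] at hmemB
      exact absurd (((Finset.mem_filter.mp hmemA).2).symm.trans
        ((Finset.mem_filter.mp hmemB).2)) (by simp)
    rw [Fin.lt_def]
    have : (B.orderEmbOfFin hB k).val ≠ (A.orderEmbOfFin hA k).val := fun hv => hne (Fin.ext hv)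
    omega
  set fw : Fin (2 * l) → Fin (2 * l) := fun i =>
    if i.val % 2 = 0 then A.orderEmbOfFin hA ⟨i.val / 2, by have := i.isLt; omega⟩
    else B.orderEmbOfFin hB ⟨i.val / 2, by have := i.isLt; omega⟩ with hfw
  have hinj : Function.Injective fw := by
    intro i j hij
    rw [hfw] at hij
    simp only at hij
    by_cases hi : i.val % 2 = 0 <;> by_cases hj : j.val % 2 = 0
    · rw [if_pos hi, if_pos hj] at hij
      have := (A.orderEmbOfFin hA).injective hij
      have := congrArg Fin.val this
      simp only [Fin.val_mk] at this
      exact Fin.ext (by omega)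
    · rw [if_pos hi, if_neg hj] at hij
      have hmA := Finset.orderEmbOfFin_mem A hA ⟨i.val / 2, by have := i.isLt; omega⟩
      have hmB := Finset.orderEmbOfFin_mem B hB ⟨j.val / 2, by have := j.isLt; omega⟩
      rw [hij] at hmA
      exact absurd (((Finset.mem_filter.mp hmA).2).symm.trans
        ((Finset.mem_filter.mp hmB).2)) (by simp)
    · rw [if_neg hi, if_pos hj] at hij
      have hmA := Finset.orderEmbOfFin_mem A hA ⟨j.val / 2, by have := j.isLt; omega⟩
      have hmB := Finset.orderEmbOfFin_mem B hB ⟨i.val / 2, by have := i.isLt; omega⟩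
      rw [← hij] at hmA
      exact absurd (((Finset.mem_filter.mp hmA).2).symm.trans
        ((Finset.mem_filter.mp hmB).2)) (by simp)
    · rw [if_neg hi, if_neg hj] at hij
      have := (B.orderEmbOfFin hB).injective hij
      have := congrArg Fin.val this
      simp only [Fin.val_mk] at this
      exact Fin.ext (by omega)
  set w : Equiv.Perm (Fin (2 * l)) :=
    Equiv.ofBijective fw (Finite.injective_iff_bijective.mp hinj) with hw
  have hwapp : ∀ i, w i = fw i := fun i => rfl
  have hPw : Peaky l w := by
    constructor
    · intro i j hij hpar
      rw [hwapp, hwapp, hfw]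
      simp only
      by_cases hi : i.val % 2 = 0
      · rw [if_pos hi, if_pos (by omega : j.val % 2 = 0)]
        exact (A.orderEmbOfFin hA).strictMono
          (Fin.mk_lt_mk.mpr (by rw [Fin.lt_def] at hij; omega))
      · rw [if_neg hi, if_neg (by omega : ¬ j.val % 2 = 0)]
        exact (B.orderEmbOfFin hB).strictMono
          (Fin.mk_lt_mk.mpr (by rw [Fin.lt_def] at hij; omega))
    · intro i h hi
      rw [hwapp, hwapp, hfw]
      simp only [Fin.val_mk]
      rw [if_pos hi, if_neg (by omega : ¬ (i + 1) % 2 = 0)]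
      have he : (⟨(i + 1) / 2, by omega⟩ : Fin l) = ⟨i / 2, by omega⟩ :=
        Fin.ext (by simp only [Fin.val_mk]; omega)
      rw [he]
      exact hpoint ⟨i / 2, by omega⟩
  refine ⟨w, hPw, ?_⟩
  apply DyckWord.ext
  show List.ofFn (wordFn w) = p.toList
  rw [hofn]
  congr 1
  funext v
  have hv : v = w (w.symm v) := (Equiv.apply_symm_apply w v).symm
  by_cases hj : (w.symm v).val % 2 = 0
  · rw [wordFn_eq_D_iff.mpr hj]
    have : v ∈ A := by
      rw [hv, hwapp, hfw]
      simp only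
      rw [if_pos hj]
      exact Finset.orderEmbOfFin_mem A hA _
    exact ((Finset.mem_filter.mp this).2).symm
  · rw [wordFn_eq_U_iff.mpr (by omega)]
    have : v ∈ B := by
      rw [hv, hwapp, hfw]
      simp only
      rw [if_neg hj]
      exact Finset.orderEmbOfFin_mem B hB _
    exact ((Finset.mem_filter.mp this).2).symm

end

theorem stmt5 (l : ℕ) :
    Nat.card {w : Equiv.Perm (Fin (2 * l)) // DownUp w ∧ occ321 w = ∅} = catalan l := by
  have h1 : Nat.card {w : Equiv.Perm (Fin (2 * l)) // DownUp w ∧ occ321 w = ∅} =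
      Nat.card {w : Equiv.Perm (Fin (2 * l)) // Peaky l w} :=
    Nat.card_congr (Equiv.subtypeEquivRight (fun w => peaky_iff w))
  have hbij : Function.Bijective
      (fun (x : {w : Equiv.Perm (Fin (2 * l)) // Peaky l w}) =>
        (⟨toWord x.1 x.2, toWord_semilength x.2⟩ : {p : DyckWord // p.semilength = l})) := by
    constructor
    · rintro ⟨w1, hw1⟩ ⟨w2, hw2⟩ h
      have := congrArg Subtype.val h
      simp only at this
      exact Subtype.ext (toWord_injective hw1 hw2 this)
    · rintro ⟨p, hp⟩
      obtain ⟨w, hP, hpe⟩ := toWord_surjective p hp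
      exact ⟨⟨w, hP⟩, Subtype.ext hpe⟩
  rw [h1, Nat.card_eq_of_bijective _ hbij, Nat.card_eq_fintype_card,
    DyckWord.card_dyckWord_semilength_eq_catalan]
end

section
/- For every m ≥ 1, the number of alternating permutations of length 2m+1 containing 123 exactly once equals the number of alternating permutations of length 2m+1 containing 321 exactly once. -/
/-- Reversal on triples of indices. -/
def tripRev {n : ℕ} : (Fin n × Fin n × Fin n) ≃ (Fin n × Fin n × Fin n) where
  toFun t := (t.2.2.rev, t.2.1.rev, t.1.rev)
  invFun t := (t.2.2.rev, t.2.1.rev, t.1.rev)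
  left_inv t := by simp
  right_inv t := by simp

lemma occ_preimage {n : ℕ} (w : Equiv.Perm (Fin n)) :
    tripRev ⁻¹' occ321 w = occ123 (w * Fin.revPerm) := by
  ext ⟨a, b, c⟩
  simp only [occ321, occ123, tripRev, Set.mem_preimage, Equiv.coe_fn_mk,
    Set.mem_setOf_eq, Equiv.Perm.mul_apply, Fin.revPerm_apply, Fin.rev_lt_rev]
  tauto

lemma occ_ncard_eq {n : ℕ} (w : Equiv.Perm (Fin n)) :
    (occ321 w).ncard = (occ123 (w * Fin.revPerm)).ncard := by
  conv_lhs => rw [← Equiv.image_preimage tripRev (occ321 w)]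
  rw [occ_preimage, Set.ncard_image_of_injective _ (Equiv.injective (tripRev (n := n)))]

lemma updown_mul_rev {m : ℕ} (w : Equiv.Perm (Fin (2 * m + 1))) (hw : UpDown w) :
    UpDown (w * Fin.revPerm) := by
  intro i h
  have hi : i + 1 ≤ 2 * m := by omega
  have hj : (2 * m - (i + 1)) + 1 < 2 * m + 1 := by omega
  have key := hw (2 * m - (i + 1)) hj
  have e1 : (Fin.revPerm (⟨i, Nat.lt_of_succ_lt h⟩ : Fin (2 * m + 1))) =
      ⟨(2 * m - (i + 1)) + 1, hj⟩ := by
    ext; simp only [Fin.revPerm_apply, Fin.val_rev]; omega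
  have e2 : (Fin.revPerm (⟨i + 1, h⟩ : Fin (2 * m + 1))) =
      ⟨2 * m - (i + 1), Nat.lt_of_succ_lt hj⟩ := by
    ext; simp only [Fin.revPerm_apply, Fin.val_rev]; omega
  rcases Nat.even_or_odd i with hpar | hpar
  · have h0 : i % 2 = 0 := Nat.even_iff.mp hpar
    have h1 : (2 * m - (i + 1)) % 2 = 1 := by omega
    simp only [h0, h1, if_pos rfl] at *
    simp only [Nat.one_ne_zero, if_false] at key
    simpa [Equiv.Perm.mul_apply, e1, e2] using key
  · have h0 : i % 2 = 1 := Nat.odd_iff.mp hpar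
    have h1 : (2 * m - (i + 1)) % 2 = 0 := by omega
    simp only [h0, h1, Nat.one_ne_zero, if_false, if_pos rfl] at *
    simpa [Equiv.Perm.mul_apply, e1, e2] using key

theorem stmt16 (m : ℕ) (hm : 1 ≤ m) :
    Nat.card {w : Equiv.Perm (Fin (2 * m + 1)) // UpDown w ∧ (occ123 w).ncard = 1} =
      Nat.card {w : Equiv.Perm (Fin (2 * m + 1)) // UpDown w ∧ (occ321 w).ncard = 1} := by
  have hrr : ∀ w : Equiv.Perm (Fin (2 * m + 1)), w * Fin.revPerm * Fin.revPerm = w := by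
    intro w
    ext x
    simp [Equiv.Perm.mul_apply]
  refine Nat.card_congr (Equiv.subtypeEquiv (Equiv.mulRight Fin.revPerm) ?_)
  intro w
  simp only [Equiv.coe_mulRight]
  constructor
  · rintro ⟨h1, h2⟩
    refine ⟨updown_mul_rev w h1, ?_⟩
    rw [occ_ncard_eq, hrr]
    exact h2
  · rintro ⟨h1, h2⟩
    have h1' : UpDown w := by
      have := updown_mul_rev _ h1
      rwa [hrr] at this
    refine ⟨h1', ?_⟩
    have h3 := occ_ncard_eq (w * Fin.revPerm)
    rw [hrr] at h3
    rw [← h3]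
    exact h2
end

section
/- Suppose a permutation w of {1,...,n} contains exactly one occurrence of the pattern 321, realized at positions i < j < k (so w_i > w_j > w_k). Then every entry preceding position j other than w_i is less than w_j, and every entry following position j other than w_k is greater than w_j. -/
theorem stmt18 (n : ℕ) (w : Equiv.Perm (Fin n)) (i j k : Fin n)
    (hij : i < j) (hjk : j < k) (h1 : w j < w i) (h2 : w k < w j)
    (huniq : occ321 w = {(i, j, k)}) :
    (∀ l : Fin n, l < j → l ≠ i → w l < w j) ∧
    (∀ l : Fin n, j < l → l ≠ k → w j < w l) := by
  constructor
  · intro l hl hli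
    by_contra h
    push_neg at h
    have hne : w l ≠ w j := fun e => (ne_of_lt hl) (w.injective e)
    have hlt : w j < w l := lt_of_le_of_ne h (Ne.symm hne)
    have : (l, j, k) ∈ occ321 w := ⟨hl, hjk, h2, hlt⟩
    rw [huniq] at this
    exact hli (congrArg Prod.fst this)
  · intro l hl hlk
    by_contra h
    push_neg at h
    have hne : w l ≠ w j := fun e => (ne_of_gt hl) (w.injective e)
    have hlt : w l < w j := lt_of_le_of_ne h hne
    have : (i, j, l) ∈ occ321 w := ⟨hij, hl, hlt, h1⟩
    rw [huniq] at this
    exact hlk (congrArg (Prod.snd ∘ Prod.snd) this)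
end

section
/- Suppose a permutation w of {1,...,n} contains exactly one occurrence of the pattern 321, at positions i < j < k. Then the sequences u = (w_1, ..., w_{j-1}, w_k) and v = (w_i, w_{j+1}, ..., w_n) are each order-isomorphic to 321-avoiding permutations. -/
lemma key19 {n : ℕ} (w : Equiv.Perm (Fin n)) (i j k : Fin n)
    (huniq : occ321 w = {(i, j, k)}) (L : List (Fin n))
    (hL : L.Pairwise (· < ·)) (hj : j ∉ L) :
    ∀ s : List (Fin n), s.Sublist (L.map w) → s.Pairwise (· > ·) → s.length ≤ 2 := by
  intro s hs hsort
  by_contra hlen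
  push_neg at hlen
  have ht : (s.take 3).Sublist (L.map w) := (List.take_sublist 3 s).trans hs
  have htlen : (s.take 3).length = 3 := by
    rw [List.length_take]; omega
  have htsort : (s.take 3).Pairwise (· > ·) :=
    hsort.sublist (List.take_sublist 3 s)
  obtain ⟨l', hl', heq⟩ := List.sublist_map_iff.mp ht
  have hl'len : l'.length = 3 := by
    have := congrArg List.length heq
    simpa [htlen] using this.symm
  match l', hl'len with
  | [p, q, r], _ =>
    have hmem : q ∈ L := hl'.mem (by simp)
    have hpw : List.Pairwise (· < ·) [p, q, r] := hL.sublist hl'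
    have hpq : p < q := by simp at hpw; tauto
    have hqr : q < r := by simp at hpw; tauto
    rw [heq] at htsort
    simp [List.Pairwise, List.pairwise_cons] at htsort
    have hocc : (p, q, r) ∈ occ321 w := ⟨hpq, hqr, by tauto, by tauto⟩
    rw [huniq] at hocc
    have : q = j := by
      have := Prod.ext_iff.mp hocc
      simp at this; tauto
    exact hj (this ▸ hmem)

theorem stmt19 (n : ℕ) (w : Equiv.Perm (Fin n)) (i j k : Fin n)
    (hij : i < j) (hjk : j < k) (h1 : w j < w i) (h2 : w k < w j)
    (huniq : occ321 w = {(i, j, k)}) :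
    (∀ s : List (Fin n),
        s.Sublist (((List.finRange n).filter (fun x => x < j)).map w ++ [w k]) →
        s.Pairwise (· > ·) → s.length ≤ 2) ∧
    (∀ s : List (Fin n),
        s.Sublist (w i :: ((List.finRange n).filter (fun x => j < x)).map w) →
        s.Pairwise (· > ·) → s.length ≤ 2) := by
  constructor
  · have h := key19 w i j k huniq ((List.finRange n).filter (fun x => x < j) ++ [k]) ?_ ?_
    · intro s hs; exact h s (by simpa using hs)
    · rw [List.pairwise_append]
      refine ⟨(List.pairwise_lt_finRange n).filter _, by simp, ?_⟩
      intro a ha b hb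
      simp at hb
      subst hb
      exact lt_trans (by simpa using (List.mem_filter.mp ha).2) hjk
    · simp
      intro h
      exact hjk.ne h
  · have h := key19 w i j k huniq (i :: (List.finRange n).filter (fun x => j < x)) ?_ ?_
    · intro s hs; exact h s (by simpa using hs)
    · rw [List.pairwise_cons]
      refine ⟨?_, (List.pairwise_lt_finRange n).filter _⟩
      intro a ha
      exact lt_trans hij (by simpa using (List.mem_filter.mp ha).2)
    · simp
      intro h
      · exact absurd h hij.ne'
end
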